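/- arXiv:2511.08528 — 3 statements merged into one kernel-verified Lean document; each statement's English description precedes it below -/
import Mathlib

section
/- Let L ⊣ R be an idempotent adjunction between C and D, let C^η be the full subcategory of C on objects C for which the unit η_C is an isomorphism. Suppose S is a class of regular monomorphisms in C containing all isomorphisms, closed under composition, and satisfying the left cancellation property (if g∘f ∈ S then f ∈ S). Assume moreover that η_C is an epimorphism for every object C. If i : C → D is a morphism in S and D lies in C^η, then C lies in C^η. -/
open CategoryTheory

/-- For an idempotent adjunction whose unit components are epimorphisms, the fixed
subcategory `C^η` is stable under subobjects belonging to a left-cancellable class `S`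
of regular monomorphisms containing the isomorphisms and closed under composition. -/
theorem unit_isIso_of_S_mono {C D : Type*} [Category C] [Category D]
    (L : C ⥤ D) (R : D ⥤ C) (adj : L ⊣ R)
    (idem : ∀ X : D, IsIso (adj.unit.app (R.obj X)))
    (S : MorphismProperty C)
    (hreg : ∀ {X Y : C} (f : X ⟶ Y), S f → RegularMono f)
    (hiso : ∀ {X Y : C} (f : X ⟶ Y), IsIso f → S f)
    (hcomp : ∀ {X Y Z : C} (f : X ⟶ Y) (g : Y ⟶ Z), S f → S g → S (f ≫ g))
    (hcancel : ∀ {X Y Z : C} (f : X ⟶ Y) (g : Y ⟶ Z), S (f ≫ g) → S f)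
    (hepi : ∀ X : C, Epi (adj.unit.app X))
    {A B : C} (i : A ⟶ B) (hi : S i) (hB : IsIso (adj.unit.app B)) :
    IsIso (adj.unit.app A) := by
  have hnat : adj.unit.app A ≫ (L ⋙ R).map i = i ≫ adj.unit.app B :=
    (adj.unit.naturality i).symm
  have hS : S (adj.unit.app A ≫ (L ⋙ R).map i) := by
    rw [hnat]; exact hcomp _ _ hi (hiso _ hB)
  have hSA : S (adj.unit.app A) := hcancel _ _ hS
  have : RegularMono (adj.unit.app A) := hreg _ hSA
  have : StrongMono (adj.unit.app A) := RegularMono.strongMono this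
  have := hepi A
  exact isIso_of_epi_of_strongMono _
end

section
/- Let (E,τ) be a Hausdorff locally convex space that is the colimit in the category of locally convex spaces of an increasing sequence of Banach spaces E_1 ↪ E_2 ↪ ⋯ with continuous injective inclusions (an LB-space), and let (X, ‖·‖_X) be a Banach space with a continuous injective linear map X ↪ E. Then there exists n such that X ⊆ E_n and the inclusion X → E_n is continuous. -/
open Function Metric Set Filter Finset Topology

/-- Open mapping theorem, first step, with "nonempty interior of closure of image of a ball"
instead of surjectivity. Adapted from mathlib's `exists_approx_preimage_norm_le`. -/
lemma my_exists_approx {E F : Type*} [NormedAddCommGroup E] [NormedSpace ℝ E]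
    [NormedAddCommGroup F] [NormedSpace ℝ F] (f : E →L[ℝ] F) {n : ℕ} {a : F}
    (ha : a ∈ interior (closure (f '' ball 0 n))) :
    ∃ C ≥ 0, ∀ y, ∃ x, dist (f x) y ≤ 1 / 2 * ‖y‖ ∧ ‖x‖ ≤ C * ‖y‖ := by
  rw [mem_interior_iff_mem_nhds, Metric.mem_nhds_iff] at ha
  obtain ⟨ε, εpos, H⟩ := ha
  have hc : (1 : ℝ) < ‖(2 : ℝ)‖ := by norm_num
  refine ⟨(ε / 2)⁻¹ * ‖(2:ℝ)‖ * 2 * n, by positivity, fun y => ?_⟩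
  rcases eq_or_ne y 0 with rfl | hy
  · use 0
    simp
  · rcases rescale_to_shell hc (half_pos εpos) hy with ⟨d, hd, ydlt, -, dinv⟩
    let δ := ‖d‖ * ‖y‖ / 4
    have δpos : 0 < δ := div_pos (mul_pos (norm_pos_iff.2 hd) (norm_pos_iff.2 hy)) (by norm_num)
    have : a + d • y ∈ ball a ε := by
      simp [dist_eq_norm, lt_of_le_of_lt ydlt.le (half_lt_self εpos)]
    rcases Metric.mem_closure_iff.1 (H this) _ δpos with ⟨z₁, z₁im, h₁⟩
    rcases (mem_image _ _ _).1 z₁im with ⟨x₁, hx₁, xz₁⟩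
    rw [← xz₁] at h₁
    rw [mem_ball, dist_eq_norm, sub_zero] at hx₁
    have : a ∈ ball a ε := by
      simp only [mem_ball, dist_self]
      exact εpos
    rcases Metric.mem_closure_iff.1 (H this) _ δpos with ⟨z₂, z₂im, h₂⟩
    rcases (mem_image _ _ _).1 z₂im with ⟨x₂, hx₂, xz₂⟩
    rw [← xz₂] at h₂
    rw [mem_ball, dist_eq_norm, sub_zero] at hx₂
    let x := x₁ - x₂
    have I : ‖f x - d • y‖ ≤ 2 * δ :=
      calc
        ‖f x - d • y‖ = ‖f x₁ - (a + d • y) - (f x₂ - a)‖ := by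
          congr 1
          simp only [x, f.map_sub]
          abel
        _ ≤ ‖f x₁ - (a + d • y)‖ + ‖f x₂ - a‖ := norm_sub_le _ _
        _ ≤ δ + δ := by rw [dist_eq_norm'] at h₁ h₂; gcongr
        _ = 2 * δ := (two_mul _).symm
    have J : ‖f (d⁻¹ • x) - y‖ ≤ 1 / 2 * ‖y‖ :=
      calc
        ‖f (d⁻¹ • x) - y‖ = ‖d⁻¹ • f x - (d⁻¹ * d) • y‖ := by
          rw [f.map_smul, inv_mul_cancel₀ hd, one_smul]
        _ = ‖d⁻¹ • (f x - d • y)‖ := by rw [mul_smul, smul_sub]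
        _ = ‖d‖⁻¹ * ‖f x - d • y‖ := by rw [norm_smul, norm_inv]
        _ ≤ ‖d‖⁻¹ * (2 * δ) := by gcongr
        _ = ‖d‖⁻¹ * ‖d‖ * ‖y‖ / 2 := by
          simp only [δ]
          ring
        _ = ‖y‖ / 2 := by
          rw [inv_mul_cancel₀, one_mul]
          simp [norm_eq_zero, hd]
        _ = 1 / 2 * ‖y‖ := by ring
    rw [← dist_eq_norm] at J
    have K : ‖d⁻¹ • x‖ ≤ (ε / 2)⁻¹ * ‖(2:ℝ)‖ * 2 * ↑n * ‖y‖ :=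
      calc
        ‖d⁻¹ • x‖ = ‖d‖⁻¹ * ‖x₁ - x₂‖ := by rw [norm_smul, norm_inv]
        _ ≤ ((ε / 2)⁻¹ * ‖(2:ℝ)‖ * ‖y‖) * (↑n + ↑n) := by
          have hx12 : ‖x₁ - x₂‖ ≤ (n : ℝ) + n :=
            le_trans (norm_sub_le _ _) (by gcongr)
          have hd' : ‖d‖⁻¹ ≤ (ε / 2)⁻¹ * ‖(2:ℝ)‖ * ‖y‖ := dinv
          exact mul_le_mul hd' hx12 (norm_nonneg _) (by positivity)
        _ = (ε / 2)⁻¹ * ‖(2:ℝ)‖ * 2 * ↑n * ‖y‖ := by ring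
    exact ⟨d⁻¹ • x, J, K⟩

/-- Open mapping theorem, second step: the approximation property implies surjectivity.
Adapted from mathlib's `exists_preimage_norm_le`. -/
lemma my_surjective {E F : Type*} [NormedAddCommGroup E] [NormedSpace ℝ E] [CompleteSpace E]
    [NormedAddCommGroup F] [NormedSpace ℝ F] (f : E →L[ℝ] F)
    (hCa : ∃ C ≥ 0, ∀ y, ∃ x, dist (f x) y ≤ 1 / 2 * ‖y‖ ∧ ‖x‖ ≤ C * ‖y‖) :
    Surjective f := by
  obtain ⟨C, C0, hC⟩ := hCa
  choose g hg using hC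
  let h y := y - f (g y)
  have hle : ∀ y, ‖h y‖ ≤ 1 / 2 * ‖y‖ := by
    intro y
    rw [← dist_eq_norm, dist_comm]
    exact (hg y).1
  intro y
  have hnle : ∀ n : ℕ, ‖h^[n] y‖ ≤ (1 / 2) ^ n * ‖y‖ := by
    intro n
    induction n with
    | zero => simp only [one_div, one_mul, iterate_zero_apply, pow_zero, le_rfl]
    | succ n IH =>
      rw [iterate_succ']
      apply le_trans (hle _) _
      rw [pow_succ', mul_assoc]
      gcongr
  let u n := g (h^[n] y)
  have ule : ∀ n, ‖u n‖ ≤ (1 / 2) ^ n * (C * ‖y‖) := fun n ↦ by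
    apply le_trans (hg _).2
    calc
      C * ‖h^[n] y‖ ≤ C * ((1 / 2) ^ n * ‖y‖) := mul_le_mul_of_nonneg_left (hnle n) C0
      _ = (1 / 2) ^ n * (C * ‖y‖) := by ring
  have sNu : Summable fun n => ‖u n‖ := by
    refine .of_nonneg_of_le (fun n => norm_nonneg _) ule ?_
    exact Summable.mul_right _ (summable_geometric_of_lt_one (by norm_num) (by norm_num))
  have su : Summable u := sNu.of_norm
  let x := tsum u
  have fsumeq : ∀ n : ℕ, f (∑ i ∈ Finset.range n, u i) = y - h^[n] y := by
    intro n
    induction n with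
    | zero => simp [f.map_zero]
    | succ n IH => rw [sum_range_succ, f.map_add, IH, iterate_succ_apply', sub_add]
  have : Tendsto (fun n => ∑ i ∈ Finset.range n, u i) atTop (𝓝 x) := su.hasSum.tendsto_sum_nat
  have L₁ : Tendsto (fun n => f (∑ i ∈ Finset.range n, u i)) atTop (𝓝 (f x)) :=
    (f.continuous.tendsto _).comp this
  simp only [fsumeq] at L₁
  have L₂ : Tendsto (fun n => y - h^[n] y) atTop (𝓝 (y - 0)) := by
    refine tendsto_const_nhds.sub ?_
    rw [tendsto_iff_norm_sub_tendsto_zero]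
    simp only [sub_zero]
    refine squeeze_zero (fun _ => norm_nonneg _) hnle ?_
    rw [← zero_mul ‖y‖]
    refine (_root_.tendsto_pow_atTop_nhds_zero_of_lt_one ?_ ?_).mul tendsto_const_nhds <;> norm_num
  have feq : f x = y - 0 := tendsto_nhds_unique L₁ L₂
  rw [sub_zero] at feq
  exact ⟨x, feq⟩

/-- Grothendieck's factorization theorem for LB-spaces: if a Hausdorff locally convex
space `E` is the locally convex colimit of an increasing sequence of Banach spaces
`X 0 ↪ X 1 ↪ ⋯` with injective continuous linking maps (expressed by the universal
property: a linear map out of `E` is continuous iff its restrictions to all steps are),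
then every continuous injective linear map from a Banach space `Y` into `E` factors
continuously through some step. -/
theorem grothendieck_factorization {E : Type} [AddCommGroup E] [Module ℝ E]
    [TopologicalSpace E] [IsTopologicalAddGroup E] [ContinuousSMul ℝ E] [T2Space E]
    [LocallyConvexSpace ℝ E]
    (X : ℕ → Type) [∀ n, NormedAddCommGroup (X n)] [∀ n, NormedSpace ℝ (X n)]
    [∀ n, CompleteSpace (X n)]
    (j : ∀ n, X n →L[ℝ] X (n + 1)) (hj : ∀ n, Function.Injective (j n))
    (u : ∀ n, X n →L[ℝ] E) (hu : ∀ n, Function.Injective (u n))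
    (hcompat : ∀ n (x : X n), u (n + 1) (j n x) = u n x)
    (hcover : ∀ e : E, ∃ n, e ∈ Set.range (u n))
    (hcolim : ∀ (G : Type) [AddCommGroup G] [Module ℝ G] [TopologicalSpace G]
      [IsTopologicalAddGroup G] [ContinuousSMul ℝ G] [LocallyConvexSpace ℝ G]
      (g : E →ₗ[ℝ] G), (∀ n, Continuous fun x : X n => g (u n x)) → Continuous g)
    (Y : Type) [NormedAddCommGroup Y] [NormedSpace ℝ Y] [CompleteSpace Y]
    (v : Y →L[ℝ] E) (hv : Function.Injective v) :
    ∃ (n : ℕ) (w : Y →L[ℝ] X n), ∀ y : Y, u n (w y) = v y := by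
  classical
  -- the "graph" spaces
  let d : ∀ n, (Y × X n) →L[ℝ] E := fun n =>
    (v.comp (ContinuousLinearMap.fst ℝ Y (X n))) - ((u n).comp (ContinuousLinearMap.snd ℝ Y (X n)))
  let K : ∀ n, Submodule ℝ (Y × X n) := fun n => (d n).ker
  have hKmem : ∀ n (p : Y × X n), p ∈ K n ↔ v p.1 = u n p.2 := by
    intro n p
    simp [K, d, LinearMap.mem_ker, sub_eq_zero]
  haveI : ∀ n, CompleteSpace (K n) := fun n =>
    (ContinuousLinearMap.isClosed_ker (d n)).completeSpace_coe
  -- the projections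
  let f : ∀ n, (K n) →L[ℝ] Y := fun n =>
    (ContinuousLinearMap.fst ℝ Y (X n)).comp (K n).subtypeL
  -- Baire category argument
  have hcov : ⋃ p : ℕ × ℕ, closure ((f p.1) '' ball 0 p.2) = Set.univ := by
    refine Subset.antisymm (subset_univ _) fun y _ => ?_
    obtain ⟨n, x, hx⟩ := hcover (v y)
    have hyK : (y, x) ∈ K n := (hKmem n (y, x)).2 hx.symm
    obtain ⟨k, hk⟩ := exists_nat_gt ‖(⟨(y, x), hyK⟩ : K n)‖
    refine mem_iUnion.2 ⟨(n, k), subset_closure ?_⟩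
    exact ⟨⟨(y, x), hyK⟩, by rwa [mem_ball, dist_zero_right], rfl⟩
  have : ∃ (p : ℕ × ℕ) (a : Y), a ∈ interior (closure ((f p.1) '' ball 0 p.2)) :=
    nonempty_interior_of_iUnion_of_closed (fun p => isClosed_closure) hcov
  obtain ⟨⟨n, k⟩, a, ha⟩ := this
  have hsurj : Surjective (f n) := my_surjective (f n) (my_exists_approx (f n) ha)
  -- injectivity of the projection
  have hinj : (f n).ker = ⊥ := by
    apply LinearMap.ker_eq_bot_of_injective
    intro p q hpq
    have hp := (hKmem n p.1).1 p.2
    have hq := (hKmem n q.1).1 q.2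
    have h1 : (p : Y × X n).1 = (q : Y × X n).1 := hpq
    have h2 : (p : Y × X n).2 = (q : Y × X n).2 := by
      apply hu n
      rw [← hp, ← hq, h1]
    exact Subtype.ext (Prod.ext h1 h2)
  let e := ContinuousLinearEquiv.ofBijective (f n) hinj (LinearMap.range_eq_top.2 hsurj)
  refine ⟨n, ((ContinuousLinearMap.snd ℝ Y (X n)).comp (K n).subtypeL).comp
    (e.symm : Y →L[ℝ] K n), fun y => ?_⟩
  have h1 : ((e.symm y : Y × X n)).1 = y :=
    ContinuousLinearEquiv.ofBijective_apply_symm_apply (f n) hinj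
      (LinearMap.range_eq_top.2 hsurj) y
  have h2 := (hKmem n (e.symm y : Y × X n)).1 (e.symm y).2
  show u n ((e.symm y : Y × X n)).2 = v y
  rw [← h2, h1]
end

section
/- Let E ⊆ F be a linear subspace of a bornological vector space (F,𝓒) equipped with the subspace bornology, and suppose (F,𝓒) admits a presentation as a filtered injective colimit of bornologifications of Banach spaces (F_i,‖·‖_i)^b. If E is complete as a bornological vector space (every bounded set is contained in a Banach disk), then E is bornologically closed in F; conversely, if E is bornologically closed in F, then E is complete. -/
open scoped Pointwise

variable {F : Type*} [AddCommGroup F] [Module ℝ F]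

/-- The span of a disk `B`, equipped with the gauge of `B`, is complete. -/
def IsCompleteDisk (B : Set F) : Prop :=
  ∀ y : ℕ → F, (∀ n, y n ∈ Submodule.span ℝ B) →
    (∀ ε : ℝ, 0 < ε → ∃ N, ∀ m ≥ N, ∀ n ≥ N, y m - y n ∈ ε • B) →
    ∃ x ∈ Submodule.span ℝ B, ∀ ε : ℝ, 0 < ε → ∃ N, ∀ n ≥ N, y n - x ∈ ε • B

/-- The gauge of `B` is a norm (not merely a seminorm) on the span of `B`. -/
def IsSeparatedDisk (B : Set F) : Prop :=
  ∀ x ∈ Submodule.span ℝ B, (∀ ε : ℝ, 0 < ε → x ∈ ε • B) → x = 0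

/-- A Banach disk: an absolutely convex set whose span, normed by the gauge,
is a Banach space. -/
def IsBanachDisk (B : Set F) : Prop :=
  Convex ℝ B ∧ Balanced ℝ B ∧ IsSeparatedDisk B ∧ IsCompleteDisk B

/-- Mackey convergence with respect to a bornology (family of bounded sets). -/
def MackeyTendsto (𝓓 : Set (Set F)) (x : ℕ → F) (l : F) : Prop :=
  ∃ B ∈ 𝓓, ∀ lam : ℝ, lam ≠ 0 → ∃ n₀ : ℕ, ∀ n ≥ n₀, x n - l ∈ lam • B

/-- A set is bornologically closed if it contains the Mackey limits of its sequences. -/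
def BornologicallyClosed (𝓓 : Set (Set F)) (U : Set F) : Prop :=
  ∀ (x : ℕ → F) (l : F), (∀ n, x n ∈ U) → MackeyTendsto 𝓓 x l → l ∈ U

lemma neg_one_smul_eq_of_balanced {B : Set F} (hB : Balanced ℝ B) :
    (-1 : ℝ) • B = B := by
  apply subset_antisymm (hB (-1) (by simp))
  intro w hw
  refine ⟨(-1 : ℝ) • w, hB (-1) (by simp) ⟨w, hw, rfl⟩, ?_⟩
  simp

lemma neg_mem_smul_of_balanced {B : Set F} (hB : Balanced ℝ B) {a : ℝ} {v : F}
    (hv : v ∈ a • B) : -v ∈ a • B := by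
  obtain ⟨d, hd, rfl⟩ := hv
  refine ⟨(-1 : ℝ) • d, ?_, by simp⟩
  rw [← neg_one_smul_eq_of_balanced hB]
  exact ⟨d, hd, rfl⟩

lemma sub_mem_add_smul_of_disk {B : Set F} (hc : Convex ℝ B) (hb : Balanced ℝ B)
    {a c : ℝ} (ha : 0 ≤ a) (hcc : 0 ≤ c) {u v : F}
    (hu : u ∈ a • B) (hv : v ∈ c • B) : u - v ∈ (a + c) • B := by
  rw [Convex.add_smul hc ha hcc]
  exact ⟨u, hu, -v, neg_mem_smul_of_balanced hb hv, by abel⟩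

lemma smul_subset_smul_of_balanced {B : Set F} (hB : Balanced ℝ B) {a c : ℝ}
    (hac : |a| ≤ c) (hcpos : 0 < c) : a • B ⊆ c • B := by
  have h1 : a • B = c • ((a / c) • B) := by
    rw [← mul_smul, mul_div_cancel₀ _ hcpos.ne']
  rw [h1]
  refine Set.smul_set_mono (hB (a / c) ?_)
  rw [Real.norm_eq_abs, abs_div, abs_of_pos hcpos]
  exact (div_le_one hcpos).2 hac

lemma abs_smul_eq_of_balanced {B : Set F} (hB : Balanced ℝ B) (lam : ℝ) :
    |lam| • B = lam • B := by
  rcases abs_choice lam with h | h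
  · rw [h]
  · rw [h, show -lam = lam * (-1) by ring, mul_smul, neg_one_smul_eq_of_balanced hB]

lemma smul_subset_span {B : Set F} (c : ℝ) :
    c • B ⊆ (Submodule.span ℝ B : Set F) := by
  rintro _ ⟨d, hd, rfl⟩
  exact Submodule.smul_mem _ _ (Submodule.subset_span hd)


/-- Let `(F, 𝓒)` be a complete bornological space, presented as a filtered injective
colimit of bornologifications of Banach spaces (spans of Banach disks `b i` with their
gauges), and let `E ⊆ F` be a linear subspace with the subspace bornology. Then `E` is
complete (every bounded subset of `E` is contained in a bounded Banach disk inside `E`)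
if and only if `E` is bornologically closed in `F`. -/
theorem complete_iff_bornologicallyClosed
    {I : Type*} [Preorder I] [IsDirected I (· ≤ ·)] [Nonempty I]
    (b : I → Set F)
    (hBan : ∀ i, IsBanachDisk (b i))
    (hmono : ∀ i j, i ≤ j → ∃ c : ℝ, 0 < c ∧ b i ⊆ c • b j)
    (𝓒 : Set (Set F))
    (hpres : ∀ S : Set F, S ∈ 𝓒 ↔ ∃ (i : I) (δ : ℝ), 0 < δ ∧ S ⊆ δ • b i)
    (E : Submodule ℝ F) :
    (∀ S ∈ 𝓒, S ⊆ (E : Set F) →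
        ∃ B : Set F, B ⊆ (E : Set F) ∧ B ∈ 𝓒 ∧ IsBanachDisk B ∧ S ⊆ B) ↔
      BornologicallyClosed 𝓒 (E : Set F) := by
  constructor
  · -- completeness implies closedness
    rintro hcomp x l hxE ⟨B, hB𝓒, hconv⟩
    obtain ⟨i, δ, hδ, hBδ⟩ := (hpres B).1 hB𝓒
    obtain ⟨hconvi, hbali, -, -⟩ := hBan i
    -- Mackey convergence with respect to the Banach disk `b i`
    have hDconv : ∀ ε : ℝ, 0 < ε → ∃ n₀, ∀ n ≥ n₀, x n - l ∈ ε • b i := by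
      intro ε hε
      obtain ⟨n₀, hn₀⟩ := hconv (ε / δ) (by positivity)
      refine ⟨n₀, fun n hn => ?_⟩
      have h2 : (ε / δ) • B ⊆ (ε / δ) • (δ • b i) := Set.smul_set_mono hBδ
      have h3 : (ε / δ) • (δ • b i) = ε • b i := by
        rw [← mul_smul, div_mul_cancel₀ _ hδ.ne']
      rw [h3] at h2
      exact h2 (hn₀ n hn)
    -- choose a fast subsequence
    have hN : ∀ k : ℕ, ∃ n₀, ∀ n ≥ n₀, x n - l ∈ ((1/2 : ℝ) ^ (k + 1)) • b i :=
      fun k => hDconv _ (by positivity)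
    choose N hN' using hN
    set M : ℕ → ℕ := fun k => (Finset.range (k + 1)).sup N + k with hM
    have hMk : ∀ k, N k ≤ M k := fun k =>
      le_trans (Finset.le_sup (Finset.self_mem_range_succ k)) (Nat.le_add_right _ _)
    have hMmono : Monotone M := by
      intro j k hjk
      exact add_le_add (Finset.sup_mono (Finset.range_subset_range.2 (by omega))) hjk
    have hMge : ∀ k, k ≤ M k := fun k => Nat.le_add_left _ _
    -- the key bounded set
    have hkey : ∀ k, ∀ m, M k ≤ m → ∀ m', M k ≤ m' →
        (2 : ℝ) ^ k • (x m - x m') ∈ b i := by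
      intro k m hm m' hm'
      have h1 : x m - l ∈ ((1/2 : ℝ) ^ (k + 1)) • b i :=
        hN' k m (le_trans (hMk k) hm)
      have h2 : x m' - l ∈ ((1/2 : ℝ) ^ (k + 1)) • b i :=
        hN' k m' (le_trans (hMk k) hm')
      have h3 : x m - x m' ∈ ((1/2 : ℝ) ^ (k + 1) + (1/2 : ℝ) ^ (k + 1)) • b i := by
        have := sub_mem_add_smul_of_disk hconvi hbali (by positivity) (by positivity) h1 h2
        simpa using this
      have h4 : (1/2 : ℝ) ^ (k + 1) + (1/2 : ℝ) ^ (k + 1) = (1/2 : ℝ) ^ k := by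
        rw [pow_succ]; ring
      rw [h4] at h3
      obtain ⟨d, hd, hdd⟩ := h3
      have : (2 : ℝ) ^ k • (x m - x m') = d := by
        rw [← hdd, ← mul_smul]
        have : (2 : ℝ) ^ k * (1/2 : ℝ) ^ k = 1 := by
          rw [← mul_pow]; norm_num
        rw [this, one_smul]
      rw [this]; exact hd
    set S : Set F :=
      {z | ∃ k m m', M k ≤ m ∧ M k ≤ m' ∧ z = (2 : ℝ) ^ k • (x m - x m')} with hS
    have hSE : S ⊆ (E : Set F) := by
      rintro z ⟨k, m, m', hm, hm', rfl⟩
      exact E.smul_mem _ (E.sub_mem (hxE m) (hxE m'))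
    have hSD : S ⊆ b i := by
      rintro z ⟨k, m, m', hm, hm', rfl⟩
      exact hkey k m hm m' hm'
    have hS𝓒 : S ∈ 𝓒 := (hpres S).2 ⟨i, 1, one_pos, by rw [one_smul]; exact hSD⟩
    obtain ⟨B', hB'E, hB'𝓒, ⟨hB'c, hB'b, hB's, hB'comp⟩, hSB'⟩ := hcomp S hS𝓒 hSE
    set y : ℕ → F := fun k => x (M k) - x (M 0) with hy
    have hyB' : ∀ k, y k ∈ B' := by
      intro k
      apply hSB'
      exact ⟨0, M k, M 0, hMmono (Nat.zero_le k), le_rfl, by simp [hy]⟩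
    have hyspan : ∀ k, y k ∈ Submodule.span ℝ B' :=
      fun k => Submodule.subset_span (hyB' k)
    have hycauchy : ∀ ε : ℝ, 0 < ε → ∃ K, ∀ m ≥ K, ∀ n ≥ K, y m - y n ∈ ε • B' := by
      intro ε hε
      obtain ⟨K, hK⟩ := exists_pow_lt_of_lt_one hε (by norm_num : (1/2 : ℝ) < 1)
      refine ⟨K, fun m hm n hn => ?_⟩
      have h1 : (2 : ℝ) ^ K • (x (M m) - x (M n)) ∈ B' :=
        hSB' ⟨K, M m, M n, hMmono hm, hMmono hn, rfl⟩
      have h2 : y m - y n ∈ ((1/2 : ℝ) ^ K) • B' := by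
        refine ⟨(2 : ℝ) ^ K • (x (M m) - x (M n)), h1, ?_⟩
        show (1/2 : ℝ) ^ K • ((2 : ℝ) ^ K • (x (M m) - x (M n))) = y m - y n
        rw [← mul_smul]
        have : (1/2 : ℝ) ^ K * (2 : ℝ) ^ K = 1 := by rw [← mul_pow]; norm_num
        rw [this, one_smul, hy]
        beta_reduce
        abel
      exact smul_subset_smul_of_balanced hB'b
        (by rw [abs_of_pos (by positivity)]; exact hK.le) hε h2
    obtain ⟨z, hzspan, hzlim⟩ := hB'comp y hyspan hycauchy
    have hl'E : x (M 0) + z ∈ E :=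
      E.add_mem (hxE _) (Submodule.span_le.2 hB'E hzspan)
    obtain ⟨j, δ', hδ', hB'j⟩ := (hpres B').1 hB'𝓒
    obtain ⟨p, hip, hjp⟩ := directed_of (· ≤ ·) i j
    obtain ⟨c₁, hc₁, h1⟩ := hmono i p hip
    obtain ⟨c₂, hc₂, h2⟩ := hmono j p hjp
    obtain ⟨hconvp, hbalp, hsepp, -⟩ := hBan p
    have hkey2 : ∀ ε : ℝ, 0 < ε → l - (x (M 0) + z) ∈ ε • b p := by
      intro ε hε
      obtain ⟨n₁, hn₁⟩ := hDconv (ε / (2 * c₁)) (by positivity)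
      obtain ⟨K, hK⟩ := hzlim (ε / (2 * (δ' * c₂))) (by positivity)
      set k := max n₁ K with hk
      have h3 : x (M k) - l ∈ (ε / (2 * c₁)) • b i :=
        hn₁ _ (le_trans (le_max_left _ _) (hMge k))
      have h4 : y k - z ∈ (ε / (2 * (δ' * c₂))) • B' := hK k (le_max_right _ _)
      have h5 : (ε / (2 * (δ' * c₂))) • B' ⊆ (ε / 2) • b p := by
        have hsub : B' ⊆ (δ' * c₂) • b p := by
          refine subset_trans hB'j ?_
          rw [mul_smul]
          exact Set.smul_set_mono h2
        refine subset_trans (Set.smul_set_mono hsub) ?_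
        rw [← mul_smul]
        rw [show ε / (2 * (δ' * c₂)) * (δ' * c₂) = ε / 2 from by
          have h : (δ' * c₂) ≠ 0 := by positivity
          field_simp]
      have h6 : (ε / (2 * c₁)) • b i ⊆ (ε / 2) • b p := by
        refine subset_trans (Set.smul_set_mono h1) ?_
        rw [← mul_smul]
        rw [show ε / (2 * c₁) * c₁ = ε / 2 from by
          field_simp]
      have h7 : (y k - z) - (x (M k) - l) ∈ (ε / 2 + ε / 2) • b p :=
        sub_mem_add_smul_of_disk hconvp hbalp (by positivity) (by positivity)
          (h5 h4) (h6 h3)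
      have heq : l - (x (M 0) + z) = (y k - z) - (x (M k) - l) := by
        rw [hy]; beta_reduce; abel
      rw [heq]
      have : ε / 2 + ε / 2 = ε := by ring
      rwa [this] at h7
    have hmem : l - (x (M 0) + z) ∈ Submodule.span ℝ (b p) :=
      smul_subset_span 1 (hkey2 1 one_pos)
    have hz : l - (x (M 0) + z) = 0 := hsepp _ hmem hkey2
    have : l = x (M 0) + z := sub_eq_zero.1 hz
    rw [this]
    exact hl'E
  · -- closedness implies completeness
    intro hclosed S hS𝓒 hSE
    obtain ⟨i, δ, hδ, hSδ⟩ := (hpres S).1 hS𝓒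
    obtain ⟨hconvi, hbali, hsepi, hcompi⟩ := hBan i
    have hbi𝓒 : b i ∈ 𝓒 := (hpres _).2 ⟨i, 1, one_pos, by rw [one_smul]⟩
    have hsubspan : (δ • b i : Set F) ⊆ (Submodule.span ℝ (b i) : Set F) :=
      smul_subset_span δ
    refine ⟨(δ • b i) ∩ E, Set.inter_subset_right,
      (hpres _).2 ⟨i, δ, hδ, Set.inter_subset_left⟩, ⟨?_, ?_, ?_, ?_⟩,
      Set.subset_inter hSδ hSE⟩
    · exact Convex.inter (hconvi.smul δ) E.convex
    · -- balanced
      rintro a ha _ ⟨w, ⟨hw1, hw2⟩, rfl⟩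
      constructor
      · obtain ⟨d, hd, rfl⟩ := hw1
        show a • δ • d ∈ δ • b i
        rw [smul_comm]
        exact Set.smul_mem_smul_set (hbali a ha ⟨d, hd, rfl⟩)
      · exact E.smul_mem _ hw2
    · -- separated
      intro v hv hsmall
      refine hsepi v ?_ ?_
      · exact Submodule.span_le.2 (subset_trans Set.inter_subset_left hsubspan) hv
      · intro ε hε
        have h1 : v ∈ (ε / δ) • ((δ • b i) ∩ E) := hsmall _ (by positivity)
        have h2 : (ε / δ) • ((δ • b i) ∩ E) ⊆ ε • b i := by
          refine subset_trans (Set.smul_set_mono Set.inter_subset_left) ?_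
          rw [← mul_smul, div_mul_cancel₀ _ hδ.ne']
        exact h2 h1
    · -- complete
      intro y hyspan hycau
      have hyE : ∀ n, y n ∈ E := fun n =>
        Submodule.span_le.2 Set.inter_subset_right (hyspan n)
      have hyspani : ∀ n, y n ∈ Submodule.span ℝ (b i) := fun n =>
        Submodule.span_le.2 (subset_trans Set.inter_subset_left hsubspan) (hyspan n)
      have hycaui : ∀ ε : ℝ, 0 < ε → ∃ K, ∀ m ≥ K, ∀ n ≥ K, y m - y n ∈ ε • b i := by
        intro ε hε
        obtain ⟨K, hK⟩ := hycau (ε / δ) (by positivity)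
        refine ⟨K, fun m hm n hn => ?_⟩
        have h1 := hK m hm n hn
        have h2 : (ε / δ) • ((δ • b i) ∩ E) ⊆ ε • b i := by
          refine subset_trans (Set.smul_set_mono Set.inter_subset_left) ?_
          rw [← mul_smul, div_mul_cancel₀ _ hδ.ne']
        exact h2 h1
      obtain ⟨z, hzspan, hzlim⟩ := hcompi y hyspani hycaui
      have hzE : z ∈ E := by
        refine hclosed y z hyE ⟨b i, hbi𝓒, ?_⟩
        intro lam hlam
        obtain ⟨n₀, h⟩ := hzlim |lam| (abs_pos.2 hlam)
        refine ⟨n₀, fun n hn => ?_⟩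
        rw [← abs_smul_eq_of_balanced hbali]
        exact h n hn
      obtain ⟨n₁, hn₁⟩ := hzlim δ hδ
      have hmemB : y n₁ - z ∈ (δ • b i) ∩ E :=
        ⟨hn₁ n₁ le_rfl, E.sub_mem (hyE n₁) hzE⟩
      have hzspanB : z ∈ Submodule.span ℝ ((δ • b i) ∩ E) := by
        have := Submodule.sub_mem _ (hyspan n₁) (Submodule.subset_span hmemB)
        simpa using this
      refine ⟨z, hzspanB, ?_⟩
      intro ε hε
      obtain ⟨K, hK⟩ := hzlim (ε * δ) (by positivity)
      refine ⟨K, fun n hn => ?_⟩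
      obtain ⟨d, hd, hdd⟩ := hK n hn
      refine ⟨δ • d, ⟨⟨d, hd, rfl⟩, ?_⟩, ?_⟩
      · have : δ • d = ε⁻¹ • (y n - z) := by
          rw [← hdd, ← mul_smul]
          congr 1
          field_simp
        rw [this]
        exact E.smul_mem _ (E.sub_mem (hyE n) hzE)
      · show ε • δ • d = y n - z
        rw [← hdd, ← mul_smul]
end
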